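/- arXiv:1108.5699 — 3 statements merged into one kernel-verified Lean document; each statement's English description precedes it below -/
import Mathlib

section
/- Let H be a finite simple graph, and suppose there exists a positive integer h0 such that for every integer h ≥ h0, s(H^(h); H) = sup_G s(H^(h); G), where the supremum is over all finite graphs G (each taken with the uniform measure). Then H is balanced. -/
open Finset
open scoped Classical

def IsStrongHom {α β : Type} (H : SimpleGraph α) (G : SimpleGraph β) (φ : α → β) : Prop :=
  ∀ u v : α, H.Adj u v ↔ G.Adj (φ u) (φ v)

def SimpleGraph.blowup {α : Type} (H : SimpleGraph α) (k : α → ℕ) :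
    SimpleGraph (Σ v : α, Fin (k v)) where
  Adj x y := H.Adj x.1 y.1
  symm := ⟨fun _ _ h => H.adj_symm h⟩
  loopless := ⟨fun x h => H.irrefl h⟩

def IsWeight {β : Type} [Fintype β] (μ : β → ℝ) : Prop :=
  (∀ v, 0 < μ v) ∧ ∑ v, μ v = 1

noncomputable def sdensity {α β : Type} [Fintype α] [Fintype β]
    (H : SimpleGraph α) (G : SimpleGraph β) (μ : β → ℝ) : ℝ :=
  ∑ ψ : α → β, if IsStrongHom H G ψ then ∏ v : α, μ (ψ v) else 0

def IsTwinFree {α : Type} (G : SimpleGraph α) : Prop :=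
  ∀ u v : α, (∀ w, G.Adj u w ↔ G.Adj v w) → u = v

def WEquiv {α β : Type} [Fintype α] [Fintype β]
    (G1 : SimpleGraph α) (μ1 : α → ℝ) (G2 : SimpleGraph β) (μ2 : β → ℝ) : Prop :=
  ∃ (m : ℕ) (T : SimpleGraph (Fin m)) (π1 : α → Fin m) (π2 : β → Fin m),
    IsTwinFree T ∧ IsStrongHom G1 T π1 ∧ IsStrongHom G2 T π2 ∧
    Function.Surjective π1 ∧ Function.Surjective π2 ∧
    ∀ t : Fin m,
      (∑ u ∈ Finset.univ.filter (fun u => π1 u = t), μ1 u) =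
        ∑ u ∈ Finset.univ.filter (fun u => π2 u = t), μ2 u

noncomputable def d1dist {α β : Type} [Fintype α] [Fintype β]
    (G1 : SimpleGraph α) (μ1 : α → ℝ) (G2 : SimpleGraph β) (μ2 : β → ℝ) : ℝ :=
  sInf {x : ℝ | ∃ (m : ℕ) (F1 F2 : SimpleGraph (Fin m)) (μ : Fin m → ℝ),
    IsWeight μ ∧ WEquiv F1 μ G1 μ1 ∧ WEquiv F2 μ G2 μ2 ∧
    x = ∑ u : Fin m, ∑ v : Fin m, μ u * μ v *
      |(if F1.Adj u v then (1:ℝ) else 0) - (if F2.Adj u v then (1:ℝ) else 0)|}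

noncomputable def sdensityP {α β : Type} [Fintype α] [Fintype β]
    (H : SimpleGraph α) (u0 : α) (G : SimpleGraph β) (v0 : β) (μ : β → ℝ) : ℝ :=
  ∑ ψ : α → β, if ψ u0 = v0 ∧ IsStrongHom H G ψ
    then ∏ v ∈ Finset.univ.erase u0, μ (ψ v) else 0

section Aux

variable {α β γ : Type} [Fintype α] [Fintype β] [Fintype γ]

lemma isStrongHom_comp_left {H1 : SimpleGraph α} {H2 : SimpleGraph β} {G : SimpleGraph γ}
    (e : H1 ≃g H2) (φ : α → γ) :
    IsStrongHom H2 G (φ ∘ e.symm) ↔ IsStrongHom H1 G φ := by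
  constructor
  · intro h u v
    have := h (e u) (e v)
    simpa [SimpleGraph.Iso.map_adj_iff] using this
  · intro h u v
    have := h (e.symm u) (e.symm v)
    have hadj : H1.Adj (e.symm u) (e.symm v) ↔ H2.Adj u v := by
      conv_rhs => rw [← e.apply_symm_apply u, ← e.apply_symm_apply v]
      exact (e.map_adj_iff).symm
    simpa [hadj] using this

lemma sdensity_congr_left (H1 : SimpleGraph α) (H2 : SimpleGraph β) (G : SimpleGraph γ)
    (e : H1 ≃g H2) (μ : γ → ℝ) : sdensity H2 G μ = sdensity H1 G μ := by
  unfold sdensity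
  rw [← Equiv.sum_comp (Equiv.arrowCongr e.toEquiv (Equiv.refl γ))
      (fun ψ : β → γ => if IsStrongHom H2 G ψ then ∏ v : β, μ (ψ v) else 0)]
  apply Finset.sum_congr rfl
  intro φ _
  have h1 : (Equiv.arrowCongr e.toEquiv (Equiv.refl γ)) φ = φ ∘ e.symm := by
    funext x; rfl
  rw [h1]
  have h2 : (∏ v : β, μ (φ (e.symm v))) = ∏ u : α, μ (φ u) :=
    Equiv.prod_comp e.toEquiv.symm (fun u => μ (φ u))
  rw [isStrongHom_comp_left e φ]
  simp only [Function.comp_apply]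
  rw [h2]

lemma isStrongHom_comp_right {H : SimpleGraph α} {G1 : SimpleGraph β} {G2 : SimpleGraph γ}
    (e : G1 ≃g G2) (φ : α → β) :
    IsStrongHom H G2 (fun a => e (φ a)) ↔ IsStrongHom H G1 φ := by
  constructor
  · intro h u v
    have := h u v
    simpa [SimpleGraph.Iso.map_adj_iff] using this
  · intro h u v
    simpa [SimpleGraph.Iso.map_adj_iff] using h u v

lemma sdensity_congr_right (H : SimpleGraph α) (G1 : SimpleGraph β) (G2 : SimpleGraph γ)
    (e : G1 ≃g G2) (μ : γ → ℝ) :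
    sdensity H G2 μ = sdensity H G1 (fun b => μ (e b)) := by
  unfold sdensity
  rw [← Equiv.sum_comp (Equiv.arrowCongr (Equiv.refl α) e.toEquiv)
      (fun ψ : α → γ => if IsStrongHom H G2 ψ then ∏ v : α, μ (ψ v) else 0)]
  apply Finset.sum_congr rfl
  intro φ _
  have h1 : (Equiv.arrowCongr (Equiv.refl α) e.toEquiv) φ = fun a => e (φ a) := by
    funext x; rfl
  rw [h1, isStrongHom_comp_right e φ]

/-- transport a blowup along an isomorphism of base graphs -/
noncomputable def blowupCongrLeft {G1 : SimpleGraph α} {G2 : SimpleGraph β} (e : G1 ≃g G2)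
    (k1 : α → ℕ) (k2 : β → ℕ) (hk : ∀ a, k1 a = k2 (e a)) :
    G1.blowup k1 ≃g G2.blowup k2 where
  toFun p := ⟨e p.1, Fin.cast (hk p.1) p.2⟩
  invFun q := ⟨e.symm q.1, Fin.cast (by rw [hk, e.apply_symm_apply]) q.2⟩
  left_inv p := by
    rcases p with ⟨a, x⟩
    apply Sigma.ext
    · simp
    · exact (Fin.heq_ext_iff (by simp [← hk])).mpr rfl
  right_inv q := by
    rcases q with ⟨b, y⟩
    apply Sigma.ext
    · simp
    · exact (Fin.heq_ext_iff (by simp)).mpr rfl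
  map_rel_iff' := by
    intro p q
    exact e.map_adj_iff

/-- composition of blowups with a constant outer blowup -/
noncomputable def blowupComp (K : SimpleGraph γ) (k : γ → ℕ) (h : ℕ) :
    (K.blowup k).blowup (fun _ => h) ≃g K.blowup (fun v => h * k v) where
  toFun p := ⟨p.1.1, finProdFinEquiv (p.2, p.1.2)⟩
  invFun q := ⟨⟨q.1, (finProdFinEquiv.symm q.2).2⟩, (finProdFinEquiv.symm q.2).1⟩
  left_inv p := by
    rcases p with ⟨⟨v, i⟩, j⟩
    simp
  right_inv q := by
    rcases q with ⟨v, x⟩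
    exact congrArg (fun z => (⟨v, z⟩ : Σ v, Fin (h * k v)))
      (by rw [Prod.mk.eta, Equiv.apply_symm_apply])
  map_rel_iff' := by
    intro p q
    rfl

end Aux

section Factor

variable {α : Type} [Fintype α]

/-- the twin setoid -/
def twinSetoid (H : SimpleGraph α) : Setoid α :=
  ⟨fun u v => ∀ w, H.Adj u w ↔ H.Adj v w,
    ⟨fun _ _ => Iff.rfl, fun h w => (h w).symm, fun h1 h2 w => (h1 w).trans (h2 w)⟩⟩

noncomputable instance (H : SimpleGraph α) : Fintype (Quotient (twinSetoid H)) := by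
  classical
  exact Quotient.fintype _

def quotGraph (H : SimpleGraph α) : SimpleGraph (Quotient (twinSetoid H)) where
  Adj := Quotient.lift₂ H.Adj (by
    intro a b a' b' ha hb
    have h1 : H.Adj a b ↔ H.Adj a' b := ha b
    have h2 : H.Adj a' b ↔ H.Adj a' b' := by
      constructor
      · intro h; exact ((hb a').mp h.symm).symm
      · intro h; exact ((hb a').mpr h.symm).symm
    exact propext (h1.trans h2))
  symm := by
    constructor
    intro x y
    induction x using Quotient.ind
    induction y using Quotient.ind
    exact fun h => H.adj_symm h
  loopless := by
    constructor
    intro x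
    induction x using Quotient.ind
    exact H.irrefl

lemma quotGraph_adj (H : SimpleGraph α) (u v : α) :
    (quotGraph H).Adj (Quotient.mk (twinSetoid H) u) (Quotient.mk (twinSetoid H) v) ↔ H.Adj u v :=
  Iff.rfl

lemma quotGraph_twinFree (H : SimpleGraph α) : IsTwinFree (quotGraph H) := by
  intro x y
  induction x using Quotient.ind with | _ u =>
  induction y using Quotient.ind with | _ v =>
  intro hxy
  exact Quotient.sound (fun w => hxy (Quotient.mk (twinSetoid H) w))

lemma isTwinFree_comap {α β : Type} (e : β ≃ α) {G : SimpleGraph α} (h : IsTwinFree G) :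
    IsTwinFree (SimpleGraph.comap (e : β → α) G) := by
  intro u v huv
  apply e.injective
  apply h
  intro w
  have := huv (e.symm w)
  simpa using this

def comapIso {α β : Type} (e : β ≃ α) (G : SimpleGraph α) :
    (SimpleGraph.comap (e : β → α) G) ≃g G := ⟨e, Iff.rfl⟩

lemma exists_factorization (H : SimpleGraph α) :
    ∃ (m : ℕ) (Ht : SimpleGraph (Fin m)) (k : Fin m → ℕ),
      (∀ v, 0 < k v) ∧ IsTwinFree Ht ∧ Nonempty (H ≃g Ht.blowup k) := by
  classical
  set Q := Quotient (twinSetoid H)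
  set QG := quotGraph H with hQG
  set k0 : Q → ℕ := fun q => Fintype.card {a : α // Quotient.mk (twinSetoid H) a = q} with hk0
  -- iso H ≃g QG.blowup k0
  let E1 : α ≃ Σ q : Q, {a : α // Quotient.mk (twinSetoid H) a = q} :=
    (Equiv.sigmaFiberEquiv (fun a : α => Quotient.mk (twinSetoid H) a)).symm
  let E2 : (Σ q : Q, {a : α // Quotient.mk (twinSetoid H) a = q}) ≃ Σ q : Q, Fin (k0 q) :=
    Equiv.sigmaCongrRight (fun q => Fintype.equivFin _)
  let E := E1.trans E2
  have hEfst : ∀ a : α, (E a).1 = Quotient.mk (twinSetoid H) a := fun a => rfl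
  have hadj : ∀ u v : α, (QG.blowup k0).Adj (E u) (E v) ↔ H.Adj u v := by
    intro u v
    show QG.Adj (E u).1 (E v).1 ↔ H.Adj u v
    rw [hEfst, hEfst]
    exact Iff.rfl
  let isoQ : H ≃g QG.blowup k0 := ⟨E, by intro u v; exact hadj u v⟩
  -- transport to Fin m
  let eQ : Q ≃ Fin (Fintype.card Q) := Fintype.equivFin Q
  refine ⟨Fintype.card Q, SimpleGraph.comap (eQ.symm : Fin (Fintype.card Q) → Q) QG,
    fun i => k0 (eQ.symm i), ?_, ?_, ?_⟩
  · intro i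
    have : Nonempty {a : α // Quotient.mk (twinSetoid H) a = eQ.symm i} := by
      obtain ⟨a, ha⟩ := Quotient.exists_rep (eQ.symm i)
      exact ⟨⟨a, ha⟩⟩
    exact Fintype.card_pos
  · exact isTwinFree_comap eQ.symm (quotGraph_twinFree H)
  · refine ⟨isoQ.trans (blowupCongrLeft ((comapIso eQ.symm QG).symm) k0 _ ?_)⟩
    intro q
    show k0 q = k0 (eQ.symm (eQ q))
    rw [Equiv.symm_apply_apply]

end Factor

section Count

variable {m : ℕ} (Ht : SimpleGraph (Fin m))

def IsoPerm (τ : Equiv.Perm (Fin m)) : Prop :=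
  ∀ u v, Ht.Adj u v ↔ Ht.Adj (τ u) (τ v)

variable {a w : Fin m → ℕ}

lemma strongHom_blowup_iff (htf : IsTwinFree Ht) (ha : ∀ v, 0 < a v)
    (ψ : (Σ v, Fin (a v)) → (Σ v, Fin (w v))) :
    IsStrongHom (Ht.blowup a) (Ht.blowup w) ψ ↔
      ∃ τ : Equiv.Perm (Fin m), IsoPerm Ht τ ∧ ∀ x, (ψ x).1 = (τ x.1 : Fin m) := by
  constructor
  · intro hψ
    let d : ∀ v, Fin (a v) := fun v => ⟨0, ha v⟩
    let sel : (∀ v, Fin (a v)) → Fin m → Fin m := fun ch v => (ψ ⟨v, ch v⟩).1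
    have claim1 : ∀ ch u v, Ht.Adj u v ↔ Ht.Adj (sel ch u) (sel ch v) := by
      intro ch u v
      exact hψ ⟨u, ch u⟩ ⟨v, ch v⟩
    have claim2 : ∀ ch, Function.Injective (sel ch) := by
      intro ch u v huv
      by_contra hne
      apply hne
      apply htf u v
      intro t
      rcases eq_or_ne t u with rfl | htu
      · constructor
        · intro h; exact absurd h Ht.irrefl
        · intro h
          exfalso
          have h2 := (claim1 ch v t).mp h
          rw [huv] at h2
          exact Ht.irrefl h2
      · rcases eq_or_ne t v with rfl | htv
        · constructor
          · intro h
            exfalso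
            have h2 := (claim1 ch u t).mp h
            rw [huv] at h2
            exact Ht.irrefl h2
          · intro h; exact absurd h Ht.irrefl
        · rw [claim1 ch u t, claim1 ch v t, huv]
    have claim3 : ∀ (v : Fin m) (x y : Fin (a v)), (ψ ⟨v, x⟩).1 = (ψ ⟨v, y⟩).1 := by
      intro v x y
      by_contra hne
      set g1 := sel (Function.update d v x) with hg1
      set g2 := sel (Function.update d v y) with hg2
      have hg1v : g1 v = (ψ ⟨v, x⟩).1 := by
        rw [hg1]; show (ψ ⟨v, Function.update d v x v⟩).1 = _
        rw [Function.update_self]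
      have hg2v : g2 v = (ψ ⟨v, y⟩).1 := by
        rw [hg2]; show (ψ ⟨v, Function.update d v y v⟩).1 = _
        rw [Function.update_self]
      have hagree : ∀ u, u ≠ v → g1 u = g2 u := by
        intro u hu
        show (ψ ⟨u, Function.update d v x u⟩).1 = (ψ ⟨u, Function.update d v y u⟩).1
        rw [Function.update_of_ne hu, Function.update_of_ne hu]
      have hbij : Function.Bijective g1 :=
        (Finite.injective_iff_bijective).mp (claim2 _)
      obtain ⟨u', hu'⟩ := hbij.2 ((ψ ⟨v, y⟩).1)
      have hu'v : u' ≠ v := by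
        intro h; subst h
        rw [hg1v] at hu'
        exact hne hu'
      have : g2 u' = g2 v := by
        rw [← hagree u' hu'v, hu', hg2v]
      exact hu'v (claim2 _ this)
    refine ⟨Equiv.ofBijective (sel d) ((Finite.injective_iff_bijective).mp (claim2 d)), ?_, ?_⟩
    · intro u v
      exact claim1 d u v
    · intro x
      rcases x with ⟨v, i⟩
      exact claim3 v i (d v)
  · rintro ⟨τ, hτ, hfit⟩
    intro x y
    show Ht.Adj x.1 y.1 ↔ Ht.Adj (ψ x).1 (ψ y).1
    rw [hfit x, hfit y]
    exact hτ x.1 y.1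

lemma tau_unique (ha : ∀ v, 0 < a v) {ψ : (Σ v, Fin (a v)) → (Σ v, Fin (w v))}
    {τ τ' : Equiv.Perm (Fin m)} (h1 : ∀ x, (ψ x).1 = (τ x.1 : Fin m))
    (h2 : ∀ x, (ψ x).1 = (τ' x.1 : Fin m)) : τ = τ' := by
  apply Equiv.ext
  intro v
  have e1 := h1 ⟨v, ⟨0, ha v⟩⟩
  have e2 := h2 ⟨v, ⟨0, ha v⟩⟩
  rw [← e1, ← e2]

/-- the fiber-counting equivalence -/
noncomputable def fitEquiv (τ : Equiv.Perm (Fin m)) :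
    {ψ : (Σ v, Fin (a v)) → (Σ v, Fin (w v)) // ∀ x, (ψ x).1 = (τ x.1 : Fin m)} ≃
      (∀ x : (Σ v, Fin (a v)), Fin (w (τ x.1))) where
  toFun p := fun x => Fin.cast (congrArg w (p.2 x)) ((p.1 x).2)
  invFun g := ⟨fun x => ⟨τ x.1, g x⟩, fun x => rfl⟩
  left_inv p := by
    rcases p with ⟨ψ, hψ⟩
    apply Subtype.ext
    funext x
    apply Sigma.ext
    · exact (hψ x).symm
    · exact (Fin.heq_ext_iff (congrArg w (hψ x).symm)).mpr rfl
  right_inv g := by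
    funext x
    rfl

lemma sum_ite_card {X : Type} [Fintype X] (p : X → Prop) [DecidablePred p] (C : ℝ) :
    (∑ ψ : X, if p ψ then C else 0) = (Fintype.card {ψ : X // p ψ} : ℝ) * C := by
  rw [← Finset.sum_filter, Finset.sum_const, nsmul_eq_mul]
  congr 1
  rw [Fintype.card_subtype]

lemma sdensity_blowup_blowup (htf : IsTwinFree Ht) (ha : ∀ v, 0 < a v) :
    sdensity (Ht.blowup a) (Ht.blowup w) (fun _ => (((∑ v, w v : ℕ) : ℝ))⁻¹) =
      ∑ τ : Equiv.Perm (Fin m), if IsoPerm Ht τ then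
        ∏ v, ((w (τ v) : ℝ) / ((∑ v, w v : ℕ) : ℝ)) ^ (a v) else 0 := by
  classical
  unfold sdensity
  have hconst : ∀ ψ : (Σ v, Fin (a v)) → (Σ v, Fin (w v)),
      (∏ x : (Σ v, Fin (a v)), (fun _ : (Σ v, Fin (w v)) => (((∑ v, w v : ℕ) : ℝ))⁻¹) (ψ x))
        = (((∑ v, w v : ℕ) : ℝ))⁻¹ ^ (∑ v, a v) := by
    intro ψ
    rw [Finset.prod_const, Finset.card_univ]
    congr 1
    rw [Fintype.card_sigma]
    simp
  have step1 : ∀ ψ : (Σ v, Fin (a v)) → (Σ v, Fin (w v)),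
      (if IsStrongHom (Ht.blowup a) (Ht.blowup w) ψ
        then (((∑ v, w v : ℕ) : ℝ))⁻¹ ^ (∑ v, a v) else 0) =
      ∑ τ : Equiv.Perm (Fin m),
        (if IsoPerm Ht τ then
          (if (∀ x, (ψ x).1 = (τ x.1 : Fin m))
            then (((∑ v, w v : ℕ) : ℝ))⁻¹ ^ (∑ v, a v) else 0) else 0) := by
    intro ψ
    by_cases hψ : IsStrongHom (Ht.blowup a) (Ht.blowup w) ψ
    · obtain ⟨τ0, hτ0, hfit0⟩ := (strongHom_blowup_iff Ht htf ha ψ).mp hψ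
      rw [if_pos hψ]
      rw [Finset.sum_eq_single τ0]
      · rw [if_pos hτ0, if_pos hfit0]
      · intro τ _ hne
        by_cases hτ : IsoPerm Ht τ
        · rw [if_pos hτ, if_neg]
          intro hfit
          exact hne (tau_unique ha hfit hfit0)
        · rw [if_neg hτ]
      · intro h; exact absurd (Finset.mem_univ τ0) h
    · rw [if_neg hψ]
      symm
      apply Finset.sum_eq_zero
      intro τ _
      by_cases hτ : IsoPerm Ht τ
      · rw [if_pos hτ, if_neg]
        intro hfit
        exact hψ ((strongHom_blowup_iff Ht htf ha ψ).mpr ⟨τ, hτ, hfit⟩)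
      · rw [if_neg hτ]
  rw [Finset.sum_congr rfl (fun ψ _ => by rw [hconst ψ])]
  rw [Finset.sum_congr rfl (fun ψ _ => step1 ψ)]
  rw [Finset.sum_comm]
  apply Finset.sum_congr rfl
  intro τ _
  by_cases hτ : IsoPerm Ht τ
  · rw [if_pos hτ]
    rw [Finset.sum_congr rfl (fun ψ _ => by rw [if_pos hτ])]
    simp only [sum_ite_card]
    have hcard : ∀ (inst : Fintype
        {ψ : (Σ v, Fin (a v)) → (Σ v, Fin (w v)) // ∀ x, (ψ x).1 = (τ x.1 : Fin m)}),
        @Fintype.card _ inst = ∏ v, (w (τ v)) ^ (a v) := by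
      intro inst
      refine (@Fintype.card_congr _ _ inst _ (fitEquiv τ)).trans ?_
      rw [Fintype.card_pi]
      have h1 : ∀ x : (Σ v, Fin (a v)), Fintype.card (Fin (w (τ x.1))) = w (τ x.1) :=
        fun x => Fintype.card_fin _
      rw [Finset.prod_congr rfl (fun x _ => h1 x)]
      rw [← Finset.univ_sigma_univ, Finset.prod_sigma]
      apply Finset.prod_congr rfl
      intro v _
      simp
    rw [hcard]
    rw [Nat.cast_prod]
    simp only [Nat.cast_pow, div_pow]
    rw [Finset.prod_div_distrib, Finset.prod_pow_eq_pow_sum, inv_pow, div_eq_mul_inv]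
  · rw [if_neg hτ]
    rw [Finset.sum_congr rfl (fun ψ _ => by rw [if_neg hτ])]
    exact Finset.sum_const_zero

end Count

section Analysis

open Real Filter

lemma gibbs_aux {m : ℕ} (k : Fin m → ℕ) (hk : ∀ v, 0 < k v) (τ : Equiv.Perm (Fin m)) :
    (∑ v, (k v : ℝ) * Real.log (k (τ v))) ≤ ∑ v, (k v : ℝ) * Real.log (k v) := by
  have key : ∀ v : Fin m, (k v : ℝ) * Real.log (k (τ v)) - (k v : ℝ) * Real.log (k v)
      ≤ (k (τ v) : ℝ) - (k v : ℝ) := by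
    intro v
    have hkv : (0 : ℝ) < (k v : ℝ) := by exact_mod_cast hk v
    have hkτ : (0 : ℝ) < (k (τ v) : ℝ) := by exact_mod_cast hk (τ v)
    have hx : (0 : ℝ) < (k (τ v) : ℝ) / (k v : ℝ) := div_pos hkτ hkv
    have hlog := Real.log_le_sub_one_of_pos hx
    rw [Real.log_div hkτ.ne' hkv.ne'] at hlog
    have := mul_le_mul_of_nonneg_left hlog hkv.le
    calc (k v : ℝ) * Real.log (k (τ v)) - (k v : ℝ) * Real.log (k v)
        = (k v : ℝ) * (Real.log (k (τ v)) - Real.log (k v)) := by ring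
      _ ≤ (k v : ℝ) * ((k (τ v) : ℝ) / (k v : ℝ) - 1) := this
      _ = (k (τ v) : ℝ) - (k v : ℝ) := by field_simp
  have hsum : ∑ v, ((k v : ℝ) * Real.log (k (τ v)) - (k v : ℝ) * Real.log (k v))
      ≤ ∑ v, ((k (τ v) : ℝ) - (k v : ℝ)) := Finset.sum_le_sum (fun v _ => key v)
  have hzero : ∑ v, ((k (τ v) : ℝ) - (k v : ℝ)) = 0 := by
    rw [Finset.sum_sub_distrib]
    rw [Equiv.sum_comp τ (fun v => (k v : ℝ))]
    ring
  rw [Finset.sum_sub_distrib] at hsum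
  linarith [hsum, hzero.le, hzero.ge]

lemma gibbs_strict {m : ℕ} (k : Fin m → ℕ) (hk : ∀ v, 0 < k v) (τ : Equiv.Perm (Fin m))
    (v0 : Fin m) (hv0 : k (τ v0) ≠ k v0) :
    (∑ v, (k v : ℝ) * Real.log (k (τ v))) < ∑ v, (k v : ℝ) * Real.log (k v) := by
  have key : ∀ v : Fin m, (k v : ℝ) * Real.log (k (τ v)) - (k v : ℝ) * Real.log (k v)
      ≤ (k (τ v) : ℝ) - (k v : ℝ) := by
    intro v
    have hkv : (0 : ℝ) < (k v : ℝ) := by exact_mod_cast hk v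
    have hkτ : (0 : ℝ) < (k (τ v) : ℝ) := by exact_mod_cast hk (τ v)
    have hx : (0 : ℝ) < (k (τ v) : ℝ) / (k v : ℝ) := div_pos hkτ hkv
    have hlog := Real.log_le_sub_one_of_pos hx
    rw [Real.log_div hkτ.ne' hkv.ne'] at hlog
    have := mul_le_mul_of_nonneg_left hlog hkv.le
    calc (k v : ℝ) * Real.log (k (τ v)) - (k v : ℝ) * Real.log (k v)
        = (k v : ℝ) * (Real.log (k (τ v)) - Real.log (k v)) := by ring
      _ ≤ (k v : ℝ) * ((k (τ v) : ℝ) / (k v : ℝ) - 1) := this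
      _ = (k (τ v) : ℝ) - (k v : ℝ) := by field_simp
  have keystrict : (k v0 : ℝ) * Real.log (k (τ v0)) - (k v0 : ℝ) * Real.log (k v0)
      < (k (τ v0) : ℝ) - (k v0 : ℝ) := by
    have hkv : (0 : ℝ) < (k v0 : ℝ) := by exact_mod_cast hk v0
    have hkτ : (0 : ℝ) < (k (τ v0) : ℝ) := by exact_mod_cast hk (τ v0)
    have hx : (0 : ℝ) < (k (τ v0) : ℝ) / (k v0 : ℝ) := div_pos hkτ hkv
    have hxne : (k (τ v0) : ℝ) / (k v0 : ℝ) ≠ 1 := by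
      rw [ne_eq, div_eq_one_iff_eq hkv.ne']
      exact_mod_cast hv0
    have hlog := Real.log_lt_sub_one_of_pos hx hxne
    rw [Real.log_div hkτ.ne' hkv.ne'] at hlog
    have := (mul_lt_mul_iff_right₀ hkv).mpr hlog
    calc (k v0 : ℝ) * Real.log (k (τ v0)) - (k v0 : ℝ) * Real.log (k v0)
        = (k v0 : ℝ) * (Real.log (k (τ v0)) - Real.log (k v0)) := by ring
      _ < (k v0 : ℝ) * ((k (τ v0) : ℝ) / (k v0 : ℝ) - 1) := this
      _ = (k (τ v0) : ℝ) - (k v0 : ℝ) := by field_simp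
  have hsum : ∑ v, ((k v : ℝ) * Real.log (k (τ v)) - (k v : ℝ) * Real.log (k v))
      < ∑ v, ((k (τ v) : ℝ) - (k v : ℝ)) := by
    apply Finset.sum_lt_sum (fun v _ => key v)
    exact ⟨v0, Finset.mem_univ v0, keystrict⟩
  have hzero : ∑ v, ((k (τ v) : ℝ) - (k v : ℝ)) = 0 := by
    rw [Finset.sum_sub_distrib]
    rw [Equiv.sum_comp τ (fun v => (k v : ℝ))]
    ring
  rw [Finset.sum_sub_distrib] at hsum
  linarith [hsum, hzero.le, hzero.ge]

end Analysis

section Analysis2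

open Real Filter

variable {m : ℕ}

noncomputable def Dfun (k : Fin m → ℕ) (s : ℝ) : ℝ :=
  ∑ c, Real.exp ((1 + s) * Real.log (k c))

noncomputable def aefun (k : Fin m → ℕ) (τ : Equiv.Perm (Fin m)) : ℝ :=
  ∑ v, (k v : ℝ) * Real.log (k (τ v))

noncomputable def Nfun (A : Finset (Equiv.Perm (Fin m))) (k : Fin m → ℕ) (h : ℕ) (s : ℝ) : ℝ :=
  ∑ τ ∈ A, Real.exp ((1 + s) * ((h : ℝ) * aefun k τ))

noncomputable def Phi (A : Finset (Equiv.Perm (Fin m))) (k : Fin m → ℕ) (h : ℕ)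
    (μ : Fin m → ℝ) : ℝ :=
  ∑ τ ∈ A, ∏ v, (μ (τ v)) ^ (h * k v)

lemma Dfun_pos (hm : 0 < m) (k : Fin m → ℕ) (s : ℝ) : 0 < Dfun k s := by
  haveI : Nonempty (Fin m) := ⟨⟨0, hm⟩⟩
  exact Finset.sum_pos (fun c _ => Real.exp_pos _) Finset.univ_nonempty

lemma Dfun_zero (k : Fin m → ℕ) (hk : ∀ v, 0 < k v) :
    Dfun k 0 = ((∑ v, k v : ℕ) : ℝ) := by
  unfold Dfun
  push_cast
  apply Finset.sum_congr rfl
  intro c _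
  rw [show (1 + (0:ℝ)) = 1 by norm_num, one_mul]
  exact Real.exp_log (by exact_mod_cast hk c)

lemma hasDerivAt_Dfun (k : Fin m → ℕ) (hk : ∀ v, 0 < k v) :
    HasDerivAt (Dfun k) (∑ c, (k c : ℝ) * Real.log (k c)) 0 := by
  have h1 : HasDerivAt (Dfun k) (∑ c, Real.exp ((1 + (0:ℝ)) * Real.log (k c)) * Real.log (k c)) 0 := by
    apply HasDerivAt.fun_sum
    intro c _
    have h2 : HasDerivAt (fun s : ℝ => (1 + s) * Real.log (k c)) (Real.log (k c)) 0 := by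
      simpa using (((hasDerivAt_id (0:ℝ)).const_add (1:ℝ)).mul_const (Real.log (k c)))
    exact h2.exp
  convert h1 using 1
  apply Finset.sum_congr rfl
  intro c _
  rw [show (1 + (0:ℝ)) = 1 by norm_num, one_mul]
  rw [Real.exp_log (by exact_mod_cast hk c : (0:ℝ) < (k c : ℝ))]

lemma Nfun_zero (A : Finset (Equiv.Perm (Fin m))) (k : Fin m → ℕ) (h : ℕ) :
    Nfun A k h 0 = ∑ τ ∈ A, Real.exp ((h : ℝ) * aefun k τ) := by
  unfold Nfun
  apply Finset.sum_congr rfl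
  intro τ _
  rw [show (1 + (0:ℝ)) = 1 by norm_num, one_mul]

lemma hasDerivAt_Nfun (A : Finset (Equiv.Perm (Fin m))) (k : Fin m → ℕ) (h : ℕ) :
    HasDerivAt (Nfun A k h)
      (∑ τ ∈ A, Real.exp ((h : ℝ) * aefun k τ) * ((h : ℝ) * aefun k τ)) 0 := by
  have h1 : HasDerivAt (Nfun A k h)
      (∑ τ ∈ A, Real.exp ((1 + (0:ℝ)) * ((h : ℝ) * aefun k τ)) * ((h : ℝ) * aefun k τ)) 0 := by
    apply HasDerivAt.fun_sum
    intro τ _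
    have h2 : HasDerivAt (fun s : ℝ => (1 + s) * ((h : ℝ) * aefun k τ)) ((h : ℝ) * aefun k τ) 0 := by
      simpa using (((hasDerivAt_id (0:ℝ)).const_add (1:ℝ)).mul_const ((h : ℝ) * aefun k τ))
    exact h2.exp
  convert h1 using 1
  apply Finset.sum_congr rfl
  intro τ _
  rw [show (1 + (0:ℝ)) = 1 by norm_num, one_mul]

lemma Phi_tilt (A : Finset (Equiv.Perm (Fin m))) (k : Fin m → ℕ) (h : ℕ) (s : ℝ) :
    Phi A k h (fun c => Real.exp ((1 + s) * Real.log (k c)) / Dfun k s) =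
      Nfun A k h s / (Dfun k s) ^ (h * ∑ v, k v) := by
  unfold Phi Nfun
  rw [Finset.sum_div]
  apply Finset.sum_congr rfl
  intro τ _
  rw [show (∏ v, (Real.exp ((1 + s) * Real.log (k (τ v))) / Dfun k s) ^ (h * k v))
      = (∏ v, Real.exp ((1 + s) * Real.log (k (τ v))) ^ (h * k v)) /
        (∏ v, (Dfun k s) ^ (h * k v)) by
    rw [← Finset.prod_div_distrib]
    apply Finset.prod_congr rfl
    intro v _
    rw [div_pow]]
  congr 1
  · -- numerator
    have hterm : ∀ v : Fin m, Real.exp ((1 + s) * Real.log (k (τ v))) ^ (h * k v) =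
        Real.exp (((h * k v : ℕ) : ℝ) * ((1 + s) * Real.log (k (τ v)))) := by
      intro v
      rw [Real.exp_nat_mul]
    rw [Finset.prod_congr rfl (fun v _ => hterm v), ← Real.exp_sum]
    congr 1
    unfold aefun
    rw [Finset.mul_sum, Finset.mul_sum]
    apply Finset.sum_congr rfl
    intro v _
    push_cast
    ring
  · -- denominator
    rw [Finset.prod_pow_eq_pow_sum]
    congr 1
    rw [← Finset.mul_sum]

lemma Phi_zero (A : Finset (Equiv.Perm (Fin m))) (k : Fin m → ℕ) (hk : ∀ v, 0 < k v) (h : ℕ) :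
    Phi A k h (fun c => ((k c : ℝ)) / ((∑ v, k v : ℕ) : ℝ)) =
      Nfun A k h 0 / (Dfun k 0) ^ (h * ∑ v, k v) := by
  rw [← Phi_tilt A k h 0]
  congr 1
  funext c
  rw [show (1 + (0:ℝ)) = 1 by norm_num, one_mul, Real.exp_log (by exact_mod_cast hk c : (0:ℝ) < (k c : ℝ)), Dfun_zero k hk]

lemma Phi_continuous (A : Finset (Equiv.Perm (Fin m))) (k : Fin m → ℕ) (h : ℕ) :
    Continuous (Phi A k h) := by
  unfold Phi
  apply continuous_finset_sum
  intro τ _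
  apply continuous_finset_prod
  intro v _
  exact (continuous_apply (τ v)).pow _

end Analysis2

section Analysis3

open Real Filter

variable {m : ℕ}

lemma exists_better_weights (hm : 0 < m) (A : Finset (Equiv.Perm (Fin m)))
    (k : Fin m → ℕ) (hk : ∀ v, 0 < k v) (h : ℕ) (hh : 0 < h)
    (σ0 : Equiv.Perm (Fin m)) (hσ0 : σ0 ∈ A) (v0 : Fin m) (hv0 : k (σ0 v0) ≠ k v0) :
    ∃ w : Fin m → ℕ, (∀ v, 0 < w v) ∧
      Phi A k h (fun c => ((k c : ℝ)) / ((∑ v, k v : ℕ) : ℝ)) <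
      Phi A k h (fun c => ((w c : ℝ)) / ((∑ v, w v : ℕ) : ℝ)) := by
  haveI : Nonempty (Fin m) := ⟨⟨0, hm⟩⟩
  have hnpos : 0 < ∑ v, k v := Finset.sum_pos (fun v _ => hk v) Finset.univ_nonempty
  set n : ℕ := ∑ v, k v with hn
  set M : ℕ := h * n with hM
  have hMpos : 0 < M := Nat.mul_pos hh hnpos
  have hD0 : Dfun k 0 = (n : ℝ) := Dfun_zero k hk
  have hDnpos : (0:ℝ) < (n:ℝ) := by exact_mod_cast hnpos
  have hDM : HasDerivAt (fun s => (Dfun k s) ^ M)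
      ((M : ℝ) * (Dfun k 0) ^ (M - 1) * (∑ c, (k c : ℝ) * Real.log (k c))) 0 :=
    (hasDerivAt_Dfun k hk).pow M
  have hψ : HasDerivAt (fun s => Nfun A k h s / (Dfun k s) ^ M)
      (((∑ τ ∈ A, Real.exp ((h : ℝ) * aefun k τ) * ((h : ℝ) * aefun k τ)) * (Dfun k 0) ^ M -
        Nfun A k h 0 * ((M : ℝ) * (Dfun k 0) ^ (M - 1) * (∑ c, (k c : ℝ) * Real.log (k c)))) /
        ((Dfun k 0) ^ M) ^ 2) 0 :=
    (hasDerivAt_Nfun A k h).div hDM (pow_ne_zero _ (Dfun_pos hm k 0).ne')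
  have hd_neg : (((∑ τ ∈ A, Real.exp ((h : ℝ) * aefun k τ) * ((h : ℝ) * aefun k τ)) * (Dfun k 0) ^ M -
        Nfun A k h 0 * ((M : ℝ) * (Dfun k 0) ^ (M - 1) * (∑ c, (k c : ℝ) * Real.log (k c)))) /
        ((Dfun k 0) ^ M) ^ 2) < 0 := by
    apply div_neg_of_neg_of_pos
    · rw [hD0, Nfun_zero]
      set aid : ℝ := ∑ c, (k c : ℝ) * Real.log (k c) with haid
      have hhr : (0:ℝ) < (h:ℝ) := by exact_mod_cast hh
      have hstrict : (∑ τ ∈ A, Real.exp ((h : ℝ) * aefun k τ) * ((h : ℝ) * aefun k τ))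
          < ∑ τ ∈ A, Real.exp ((h : ℝ) * aefun k τ) * ((h : ℝ) * aid) := by
        apply Finset.sum_lt_sum
        · intro τ _
          apply mul_le_mul_of_nonneg_left _ (Real.exp_pos _).le
          apply mul_le_mul_of_nonneg_left _ hhr.le
          exact gibbs_aux k hk τ
        · refine ⟨σ0, hσ0, ?_⟩
          apply mul_lt_mul_of_pos_left _ (Real.exp_pos _)
          apply mul_lt_mul_of_pos_left _ hhr
          exact gibbs_strict k hk σ0 v0 hv0
      have hfac : (∑ τ ∈ A, Real.exp ((h : ℝ) * aefun k τ) * ((h : ℝ) * aid))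
          = (∑ τ ∈ A, Real.exp ((h : ℝ) * aefun k τ)) * ((h : ℝ) * aid) :=
        (Finset.sum_mul _ _ _).symm
      have hpow : (n:ℝ) ^ M = (n:ℝ) * (n:ℝ) ^ (M - 1) := by
        conv_lhs => rw [show M = 1 + (M - 1) by omega]
        rw [pow_add, pow_one]
      have hMr : (M:ℝ) = (h:ℝ) * (n:ℝ) := by rw [hM]; push_cast; ring
      have h2 : (∑ τ ∈ A, Real.exp ((h : ℝ) * aefun k τ) * ((h : ℝ) * aefun k τ)) * (n:ℝ)^M
          < ((∑ τ ∈ A, Real.exp ((h : ℝ) * aefun k τ)) * ((h : ℝ) * aid)) * (n:ℝ)^M := by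
        apply mul_lt_mul_of_pos_right _ (by positivity)
        rw [← hfac]
        exact hstrict
      have h3 : ((∑ τ ∈ A, Real.exp ((h : ℝ) * aefun k τ)) * ((h : ℝ) * aid)) * (n:ℝ)^M
          = (∑ τ ∈ A, Real.exp ((h : ℝ) * aefun k τ)) * ((M : ℝ) * (n:ℝ)^(M-1) * aid) := by
        rw [hpow, hMr]; ring
      linarith
    · exact pow_pos (pow_pos (Dfun_pos hm k 0) M) 2
  -- get a point s < 0 with larger value
  have hslope := hasDerivAt_iff_tendsto_slope.mp hψ
  have hev1 : ∀ᶠ s in nhdsWithin (0:ℝ) {(0:ℝ)}ᶜ,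
      slope (fun s => Nfun A k h s / (Dfun k s) ^ M) 0 s < 0 :=
    hslope.eventually_lt_const hd_neg
  have hsub : Set.Iio (0:ℝ) ⊆ {(0:ℝ)}ᶜ := fun x hx => ne_of_lt hx
  have hev2 : ∀ᶠ s in nhdsWithin (0:ℝ) (Set.Iio 0),
      slope (fun s => Nfun A k h s / (Dfun k s) ^ M) 0 s < 0 :=
    hev1.filter_mono (nhdsWithin_mono 0 hsub)
  have hev3 : ∀ᶠ s in nhdsWithin (0:ℝ) (Set.Iio 0), s < 0 :=
    eventually_mem_nhdsWithin
  obtain ⟨s, hs1, hs2⟩ := (hev2.and hev3).exists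
  have hgt : Nfun A k h 0 / (Dfun k 0) ^ M < Nfun A k h s / (Dfun k s) ^ M := by
    rw [slope_def_field, sub_zero] at hs1
    rcases div_neg_iff.mp hs1 with ⟨hp, hq⟩ | ⟨hp, hq⟩
    · linarith
    · linarith
  -- tilted weights
  set μs : Fin m → ℝ := fun c => Real.exp ((1 + s) * Real.log (k c)) / Dfun k s with hμs
  have hμpos : ∀ c, 0 < μs c := fun c => div_pos (Real.exp_pos _) (Dfun_pos hm k s)
  have hsum1 : ∑ c, μs c = 1 := by
    rw [hμs, ← Finset.sum_div]
    exact div_self (Dfun_pos hm k s).ne'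
  have hPhis : Phi A k h (fun c => ((k c : ℝ)) / ((n : ℕ) : ℝ)) < Phi A k h μs := by
    calc Phi A k h (fun c => ((k c : ℝ)) / ((n : ℕ) : ℝ))
        = Nfun A k h 0 / (Dfun k 0) ^ M := Phi_zero A k hk h
      _ < Nfun A k h s / (Dfun k s) ^ M := hgt
      _ = Phi A k h μs := (Phi_tilt A k h s).symm
  -- natural approximants
  have hcomp : ∀ c : Fin m, Tendsto (fun L : ℕ => ((⌈μs c * L⌉₊ : ℝ) / (L : ℝ)))
      atTop (nhds (μs c)) := by
    intro c
    apply tendsto_of_tendsto_of_tendsto_of_le_of_le' tendsto_const_nhds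
      (by simpa using tendsto_const_nhds.add (tendsto_one_div_atTop_nhds_zero_nat (𝕜 := ℝ)) :
        Tendsto (fun L : ℕ => μs c + 1 / (L : ℝ)) atTop (nhds (μs c)))
    · filter_upwards [eventually_ge_atTop 1] with L hL
      have hLpos : (0:ℝ) < (L:ℝ) := by exact_mod_cast hL
      rw [le_div_iff₀ hLpos]
      exact Nat.le_ceil _
    · filter_upwards [eventually_ge_atTop 1] with L hL
      have hLpos : (0:ℝ) < (L:ℝ) := by exact_mod_cast hL
      rw [div_le_iff₀ hLpos]
      have := (Nat.ceil_lt_add_one (mul_nonneg (hμpos c).le (Nat.cast_nonneg L))).le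
      calc (⌈μs c * L⌉₊ : ℝ) ≤ μs c * L + 1 := this
        _ ≤ (μs c + 1 / L) * L := by
          field_simp
          exact le_rfl
  have hden : Tendsto (fun L : ℕ => (((∑ v, ⌈μs v * L⌉₊ : ℕ) : ℝ)) / (L : ℝ)) atTop (nhds 1) := by
    have h1 : Tendsto (fun L : ℕ => ∑ c, ((⌈μs c * L⌉₊ : ℝ) / (L : ℝ))) atTop (nhds (∑ c, μs c)) :=
      tendsto_finset_sum _ (fun c _ => hcomp c)
    rw [hsum1] at h1
    apply h1.congr
    intro L
    rw [← Finset.sum_div]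
    congr 1
    push_cast
    rfl
  have hvec : Tendsto (fun L : ℕ => fun c => ((⌈μs c * L⌉₊ : ℝ) / (((∑ v, ⌈μs v * L⌉₊ : ℕ)) : ℝ)))
      atTop (nhds μs) := by
    rw [tendsto_pi_nhds]
    intro c
    have h2 : Tendsto (fun L : ℕ =>
        ((⌈μs c * L⌉₊ : ℝ) / (L:ℝ)) / ((((∑ v, ⌈μs v * L⌉₊ : ℕ)) : ℝ) / (L:ℝ)))
        atTop (nhds (μs c / 1)) := (hcomp c).div hden one_ne_zero
    rw [div_one] at h2
    refine Tendsto.congr' ?_ h2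
    filter_upwards [eventually_ge_atTop 1] with L hL
    have hL0 : ((L:ℝ)) ≠ 0 := Nat.cast_ne_zero.mpr (by omega)
    rw [div_div_div_comm, div_self hL0, div_one]
  have hPhitend : Tendsto (fun L : ℕ =>
      Phi A k h (fun c => ((⌈μs c * L⌉₊ : ℝ) / (((∑ v, ⌈μs v * L⌉₊ : ℕ)) : ℝ))))
      atTop (nhds (Phi A k h μs)) :=
    ((Phi_continuous A k h).tendsto μs).comp hvec
  have hfinal := hPhitend.eventually_const_lt hPhis
  obtain ⟨L, hLgt, hL1⟩ := (hfinal.and (eventually_ge_atTop 1)).exists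
  refine ⟨fun c => ⌈μs c * L⌉₊, ?_, ?_⟩
  · intro v
    rw [Nat.ceil_pos]
    have hLpos : (0:ℝ) < (L:ℝ) := by exact_mod_cast hL1
    exact mul_pos (hμpos v) hLpos
  · exact hLgt

end Analysis3

section Bound

lemma sdensity_le_one {α β : Type} [Fintype α] [Fintype β] (H : SimpleGraph α)
    (G : SimpleGraph β) (μ : β → ℝ) (hμ0 : ∀ b, 0 ≤ μ b) (hμ1 : ∑ b, μ b = 1) :
    sdensity H G μ ≤ 1 := by
  unfold sdensity
  have h1 : ∀ ψ : α → β, (if IsStrongHom H G ψ then ∏ v : α, μ (ψ v) else 0)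
      ≤ ∏ v : α, μ (ψ v) := by
    intro ψ
    by_cases hψ : IsStrongHom H G ψ
    · rw [if_pos hψ]
    · rw [if_neg hψ]
      exact Finset.prod_nonneg (fun v _ => hμ0 _)
  calc (∑ ψ : α → β, if IsStrongHom H G ψ then ∏ v : α, μ (ψ v) else 0)
      ≤ ∑ ψ : α → β, ∏ v : α, μ (ψ v) := Finset.sum_le_sum (fun ψ _ => h1 ψ)
    _ = ∏ _v : α, ∑ b : β, μ b := by
        rw [Finset.prod_univ_sum]
        rw [Fintype.piFinset_univ]
    _ = 1 := by rw [hμ1]; exact Finset.prod_const_one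

end Bound

def GraphBalanced {α : Type} [Fintype α] (H : SimpleGraph α) : Prop :=
  ∃ (m : ℕ) (Ht : SimpleGraph (Fin m)) (k : Fin m → ℕ),
    (∀ v, 0 < k v) ∧ IsTwinFree Ht ∧ Nonempty (H ≃g Ht.blowup k) ∧
    ∀ σ : Ht ≃g Ht, ∀ v, k (σ v) = k v



theorem stmt2 {α : Type} [Fintype α] [Nonempty α] (H : SimpleGraph α)
    (hsup : ∃ h0 : ℕ, 0 < h0 ∧ ∀ h : ℕ, h0 ≤ h →
      sdensity (H.blowup fun _ => h) H (fun _ => (Fintype.card α : ℝ)⁻¹) =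
        sSup {x : ℝ | ∃ n : ℕ, 0 < n ∧ ∃ G : SimpleGraph (Fin n),
          x = sdensity (H.blowup fun _ => h) G (fun _ => (n : ℝ)⁻¹)}) :
    GraphBalanced H := by
  classical
  obtain ⟨h0, hh0, hsup⟩ := hsup
  obtain ⟨m, Ht, k, hk, htf, ⟨e0⟩⟩ := exists_factorization H
  by_contra hnb
  have hnotbal : ¬(∀ σ : Ht ≃g Ht, ∀ v, k (σ v) = k v) :=
    fun hbal => hnb ⟨m, Ht, k, hk, htf, ⟨e0⟩, hbal⟩
  push_neg at hnotbal
  obtain ⟨σ0, v0, hv0⟩ := hnotbal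
  -- m positive
  have hm : 0 < m := by
    have h1 : Nonempty (Σ v : Fin m, Fin (k v)) := Nonempty.map e0.toEquiv ‹Nonempty α›
    obtain ⟨⟨v, _⟩⟩ := h1
    exact v.pos
  -- the automorphism set
  set A : Finset (Equiv.Perm (Fin m)) :=
    Finset.univ.filter (fun τ : Equiv.Perm (Fin m) => IsoPerm Ht τ) with hA
  have hσ0A : (σ0.toEquiv : Equiv.Perm (Fin m)) ∈ A := by
    rw [hA, Finset.mem_filter]
    refine ⟨Finset.mem_univ _, ?_⟩
    intro u v
    exact (σ0.map_adj_iff).symm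
  -- positive exponents
  have hapos : ∀ v : Fin m, 0 < h0 * k v := fun v => Nat.mul_pos hh0 (hk v)
  -- better weights
  obtain ⟨w, hw, hlt⟩ := exists_better_weights hm A k hk h0 hh0 σ0.toEquiv hσ0A v0 hv0
  -- the big iso for the source
  have Ebig : H.blowup (fun _ => h0) ≃g Ht.blowup (fun v => h0 * k v) :=
    (blowupCongrLeft e0 (fun _ => h0) (fun _ => h0) (fun _ => rfl)).trans (blowupComp Ht k h0)
  -- cardinality
  have hcard : Fintype.card α = ∑ v, k v := by
    rw [Fintype.card_congr e0.toEquiv]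
    simp [Fintype.card_sigma]
  -- bridging Phi with the ite-sum
  have hPhiite : ∀ (u : Fin m → ℕ),
      (∑ τ : Equiv.Perm (Fin m), if IsoPerm Ht τ then
        ∏ v, ((u (τ v) : ℝ) / ((∑ v, u v : ℕ) : ℝ)) ^ (h0 * k v) else 0)
      = Phi A k h0 (fun c => ((u c : ℝ)) / ((∑ v, u v : ℕ) : ℝ)) := by
    intro u
    unfold Phi
    rw [hA, Finset.sum_filter]
  -- left hand side value
  have step_left : sdensity (H.blowup fun _ => h0) H (fun _ => (Fintype.card α : ℝ)⁻¹)
      = Phi A k h0 (fun c => ((k c : ℝ)) / ((∑ v, k v : ℕ) : ℝ)) := by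
    have t1 : sdensity (Ht.blowup (fun v => h0 * k v)) H (fun _ => (Fintype.card α : ℝ)⁻¹)
        = sdensity (H.blowup fun _ => h0) H (fun _ => (Fintype.card α : ℝ)⁻¹) :=
      sdensity_congr_left _ _ _ Ebig _
    have t2 : sdensity (Ht.blowup (fun v => h0 * k v)) H (fun _ => (Fintype.card α : ℝ)⁻¹)
        = sdensity (Ht.blowup (fun v => h0 * k v)) (Ht.blowup k)
            (fun _ => ((∑ v, k v : ℕ) : ℝ)⁻¹) := by
      have t3 := sdensity_congr_right (Ht.blowup (fun v => h0 * k v)) (Ht.blowup k) H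
        e0.symm (fun _ => (Fintype.card α : ℝ)⁻¹)
      rw [t3]
      congr 1
      funext b
      rw [hcard]
    rw [← t1, t2]
    have t4 := sdensity_blowup_blowup (a := fun v => h0 * k v) (w := k) Ht htf hapos
    rw [t4, hPhiite k]
  -- right hand side competitor
  set N : ℕ := ∑ v, w v with hN
  have hNpos : 0 < N := by
    rw [hN]
    haveI : Nonempty (Fin m) := ⟨⟨0, hm⟩⟩
    exact Finset.sum_pos (fun v _ => hw v) Finset.univ_nonempty
  have hcardN : Fintype.card (Σ v : Fin m, Fin (w v)) = N := by
    simp [Fintype.card_sigma, hN]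
  set EN : (Σ v : Fin m, Fin (w v)) ≃ Fin N := Fintype.equivFinOfCardEq hcardN with hEN
  set Gc : SimpleGraph (Fin N) := SimpleGraph.comap (EN.symm : Fin N → (Σ v : Fin m, Fin (w v)))
    (Ht.blowup w) with hGc
  have step_right : sdensity (H.blowup fun _ => h0) Gc (fun _ => ((N : ℕ) : ℝ)⁻¹)
      = Phi A k h0 (fun c => ((w c : ℝ)) / ((∑ v, w v : ℕ) : ℝ)) := by
    have t1 : sdensity (Ht.blowup (fun v => h0 * k v)) Gc (fun _ => ((N : ℕ) : ℝ)⁻¹)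
        = sdensity (H.blowup fun _ => h0) Gc (fun _ => ((N : ℕ) : ℝ)⁻¹) :=
      sdensity_congr_left _ _ _ Ebig _
    have t2 : sdensity (Ht.blowup (fun v => h0 * k v)) Gc (fun _ => ((N : ℕ) : ℝ)⁻¹)
        = sdensity (Ht.blowup (fun v => h0 * k v)) (Ht.blowup w)
            (fun _ => ((∑ v, w v : ℕ) : ℝ)⁻¹) := by
      have t3 := sdensity_congr_right (Ht.blowup (fun v => h0 * k v)) (Ht.blowup w) Gc
        ((comapIso EN.symm (Ht.blowup w)).symm) (fun _ => ((N : ℕ) : ℝ)⁻¹)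
      rw [t3]
    rw [← t1, t2]
    have t4 := sdensity_blowup_blowup (a := fun v => h0 * k v) (w := w) Ht htf hapos
    rw [t4, hPhiite w]
  -- the sup set
  set S : Set ℝ := {x : ℝ | ∃ n : ℕ, 0 < n ∧ ∃ G : SimpleGraph (Fin n),
    x = sdensity (H.blowup fun _ => h0) G (fun _ => (n : ℝ)⁻¹)} with hS
  have hbdd : BddAbove S := by
    refine ⟨1, ?_⟩
    rintro x ⟨n, hn, G, rfl⟩
    apply sdensity_le_one
    · intro b
      positivity
    · rw [Finset.sum_const, Finset.card_univ, Fintype.card_fin, nsmul_eq_mul]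
      exact mul_inv_cancel₀ (by exact_mod_cast hn.ne')
  have hmem : sdensity (H.blowup fun _ => h0) Gc (fun _ => ((N : ℕ) : ℝ)⁻¹) ∈ S :=
    ⟨N, hNpos, Gc, rfl⟩
  have hle : sdensity (H.blowup fun _ => h0) Gc (fun _ => ((N : ℕ) : ℝ)⁻¹) ≤ sSup S :=
    le_csSup hbdd hmem
  have heq := hsup h0 le_rfl
  rw [step_left] at heq
  rw [step_right] at hle
  rw [← heq] at hle
  exact absurd hle (not_le.mpr hlt)
end

section
/- Let H be a twin-free finite simple graph and let k be a vector of positive integers indexed by V(H) that is invariant under every automorphism of H (i.e., k(σ(v)) = k(v) for all σ ∈ Aut(H) and v ∈ V(H)). Then for every positive integer h and every probability measure μ on V(H) with full support, s(H^(h·k); H^μ) ≤ s(H^(h·k); H^{μ_k}). -/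
open Finset
open scoped Classical

lemma strongHom_blowup {α : Type} [Fintype α] (H : SimpleGraph α) (htf : IsTwinFree H)
    (m : α → ℕ) (hm : ∀ v, 0 < m v) (ψ : (Σ v : α, Fin (m v)) → α)
    (hψ : IsStrongHom (H.blowup m) H ψ) :
    ∃ σ : H ≃g H, ∀ x, ψ x = σ x.1 := by
  set f : α → α := fun v => ψ ⟨v, ⟨0, hm v⟩⟩ with hf
  have hstrong : ∀ v w, H.Adj v w ↔ H.Adj (f v) (f w) := fun v w =>
    hψ ⟨v, ⟨0, hm v⟩⟩ ⟨w, ⟨0, hm w⟩⟩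
  have hinj : Function.Injective f := by
    intro v w hvw
    apply htf
    intro z
    rw [hstrong v z, hstrong w z, hvw]
  have hbij : Function.Bijective f := Finite.injective_iff_bijective.mp hinj
  have hfib : ∀ x : (Σ v : α, Fin (m v)), ψ x = f x.1 := by
    intro x
    apply htf
    intro z
    obtain ⟨u, rfl⟩ := hbij.2 z
    have h1 : H.Adj x.1 u ↔ H.Adj (ψ x) (ψ ⟨u, ⟨0, hm u⟩⟩) := hψ x ⟨u, ⟨0, hm u⟩⟩
    rw [← h1, ← hstrong x.1 u]
  exact ⟨⟨Equiv.ofBijective f hbij, fun {v w} => (hstrong v w).symm⟩, hfib⟩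

lemma core_ineq {α : Type} [Fintype α] [Nonempty α] (k : α → ℕ) (hk : ∀ v, 0 < k v)
    (ν : α → ℝ) (hν : ∀ v, 0 < ν v) (hsum : ∑ v, ν v = 1) :
    ∏ v, ν v ^ (k v) ≤ ∏ v, ((k v : ℝ) / ∑ u : α, (k u : ℝ)) ^ (k v) := by
  set K : ℝ := ∑ u : α, (k u : ℝ) with hKdef
  have hK : 0 < K := Finset.sum_pos (fun u _ => by exact_mod_cast hk u) Finset.univ_nonempty
  have hw : ∀ v, 0 < (k v : ℝ) / K := fun v => div_pos (by exact_mod_cast hk v) hK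
  have hwsum : ∑ v, (k v : ℝ) / K = 1 := by
    rw [← Finset.sum_div]; exact div_self hK.ne'
  have geom := Real.geom_mean_le_arith_mean_weighted Finset.univ (fun v => (k v : ℝ) / K)
      (fun v => ν v / ((k v : ℝ) / K)) (fun v _ => (hw v).le) hwsum
      (fun v _ => (div_nonneg (hν v).le (hw v).le))
  have hval : ∑ v, ((k v : ℝ) / K) * (ν v / ((k v : ℝ) / K)) = 1 := by
    rw [← hsum]
    refine Finset.sum_congr rfl fun v _ => ?_
    have h1 : ((k v : ℝ)) ≠ 0 := Nat.cast_ne_zero.mpr (hk v).ne'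
    field_simp
  rw [hval] at geom
  -- turn quotient into quotient of products
  have hsplit : ∀ v, (ν v / ((k v : ℝ) / K)) ^ ((k v : ℝ) / K)
      = ν v ^ ((k v : ℝ) / K) / ((k v : ℝ) / K) ^ ((k v : ℝ) / K) := fun v =>
    Real.div_rpow (hν v).le (hw v).le _
  rw [Finset.prod_congr rfl (fun v _ => hsplit v), Finset.prod_div_distrib] at geom
  have hBpos : 0 < ∏ v, ((k v : ℝ) / K) ^ ((k v : ℝ) / K) :=
    Finset.prod_pos fun v _ => Real.rpow_pos_of_pos (hw v) _
  have h2 : ∏ v, ν v ^ ((k v : ℝ) / K) ≤ ∏ v, ((k v : ℝ) / K) ^ ((k v : ℝ) / K) :=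
    (div_le_one hBpos).mp geom
  have h3 := Real.rpow_le_rpow (Finset.prod_nonneg fun v _ =>
    Real.rpow_nonneg (hν v).le _) h2 hK.le
  rw [← Real.finset_prod_rpow _ _ (fun v _ => Real.rpow_nonneg (hν v).le _) K,
      ← Real.finset_prod_rpow _ _ (fun v _ => Real.rpow_nonneg (hw v).le _) K] at h3
  have key : ∀ (a : ℝ) (v : α), 0 ≤ a → (a ^ ((k v : ℝ) / K)) ^ K = a ^ (k v) := by
    intro a v ha
    rw [← Real.rpow_natCast a (k v), ← Real.rpow_mul ha, div_mul_cancel₀ _ hK.ne']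
  calc ∏ v, ν v ^ (k v) = ∏ v, (ν v ^ ((k v : ℝ) / K)) ^ K :=
        Finset.prod_congr rfl fun v _ => (key (ν v) v (hν v).le).symm
    _ ≤ ∏ v, (((k v : ℝ) / K) ^ ((k v : ℝ) / K)) ^ K := h3
    _ = ∏ v, ((k v : ℝ) / K) ^ (k v) :=
        Finset.prod_congr rfl fun v _ => key _ v (hw v).le

theorem stmt10 {α : Type} [Fintype α] [Nonempty α] (H : SimpleGraph α)
    (htf : IsTwinFree H) (k : α → ℕ) (hk : ∀ v, 0 < k v)
    (hinv : ∀ σ : H ≃g H, ∀ v, k (σ v) = k v)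
    (h : ℕ) (hh : 0 < h) (μ : α → ℝ) (hμ : IsWeight μ) :
    sdensity (H.blowup fun v => h * k v) H μ ≤
      sdensity (H.blowup fun v => h * k v) H (fun v => (k v : ℝ) / ∑ u : α, (k u : ℝ)) := by
  unfold sdensity
  apply Finset.sum_le_sum
  intro ψ _
  by_cases hψ : IsStrongHom (H.blowup fun v => h * k v) H ψ
  · rw [if_pos hψ, if_pos hψ]
    obtain ⟨σ, hσ⟩ := strongHom_blowup H htf _ (fun v => Nat.mul_pos hh (hk v)) ψ hψ
    have hprod : ∀ g : α → ℝ,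
        ∏ x : (Σ v : α, Fin (h * k v)), g x.1 = ∏ v, g v ^ (h * k v) := by
      intro g
      rw [← Finset.univ_sigma_univ, Finset.prod_sigma]
      simp
    have e1 : ∀ ν : α → ℝ, ∏ x : (Σ v : α, Fin (h * k v)), ν (ψ x)
        = ∏ v, ν v ^ (h * k v) := by
      intro ν
      rw [Finset.prod_congr rfl (fun x _ => by rw [hσ x] :
            ∀ x ∈ (Finset.univ : Finset (Σ v : α, Fin (h * k v))), ν (ψ x) = ν (σ x.1)),
          hprod (fun a => ν (σ a))]
      calc ∏ v, ν (σ v) ^ (h * k v) = ∏ v, ν (σ v) ^ (h * k (σ v)) :=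
            Finset.prod_congr rfl fun v _ => by rw [hinv σ v]
        _ = ∏ v, ν v ^ (h * k v) :=
            Equiv.prod_comp σ.toEquiv (fun a => ν a ^ (h * k a))
    rw [e1 μ, e1 (fun v => (k v : ℝ) / ∑ u : α, (k u : ℝ))]
    have key : ∀ ν : α → ℝ, ∏ v, ν v ^ (h * k v) = (∏ v, ν v ^ (k v)) ^ h := by
      intro ν
      rw [← Finset.prod_pow]
      exact Finset.prod_congr rfl fun v _ => by rw [← pow_mul, mul_comm]
    rw [key μ, key (fun v => (k v : ℝ) / ∑ u : α, (k u : ℝ))]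
    exact pow_le_pow_left₀ (Finset.prod_nonneg fun v _ => pow_nonneg (hμ.1 v).le _)
      (core_ineq k hk μ hμ.1 hμ.2) h
  · rw [if_neg hψ, if_neg hψ]
end

section
/- Let H be a twin-free finite simple graph and let k be a vector of positive integers indexed by V(H). Suppose there exists a positive integer h0 such that for every integer h ≥ h0, the function μ ↦ s(H^(h·k); H^μ) achieves a maximum over all probability measures μ on V(H) with full support at μ = μ_k. Then k is invariant under every automorphism of H, i.e., k(σ(v)) = k(v) for all σ ∈ Aut(H) and v ∈ V(H). -/
open Finset
open scoped Classical

section Aux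

variable {α : Type} [Fintype α] {H : SimpleGraph α}

lemma strongHom_injective (htf : IsTwinFree H) {f : α → α}
    (hf : IsStrongHom H H f) : Function.Injective f := by
  intro u w h
  apply htf u w
  intro x
  rw [hf u x, hf w x, h]

lemma blowup_strongHom_eq (htf : IsTwinFree H) {m : α → ℕ}
    (hm : ∀ v, 0 < m v) {ψ : (Σ v : α, Fin (m v)) → α}
    (hψ : IsStrongHom (H.blowup m) H ψ) (v : α) (i : Fin (m v)) :
    ψ ⟨v, i⟩ = ψ ⟨v, ⟨0, hm v⟩⟩ := by
  set τ : α → α := fun w => ψ ⟨w, ⟨0, hm w⟩⟩ with hτ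
  have hτhom : IsStrongHom H H τ := fun u w => hψ ⟨u, ⟨0, hm u⟩⟩ ⟨w, ⟨0, hm w⟩⟩
  have hinj : Function.Injective τ := strongHom_injective htf hτhom
  have hsurj : Function.Surjective τ := Finite.surjective_of_injective hinj
  obtain ⟨u, hu⟩ := hsurj (ψ ⟨v, i⟩)
  have huv : u = v := by
    apply htf u v
    intro x
    rw [hτhom u x, hu]
    exact (hψ ⟨v, i⟩ ⟨x, ⟨0, hm x⟩⟩).symm
  rw [huv] at hu
  exact hu.symm

lemma sdensity_blowup_eq (htf : IsTwinFree H) (m : α → ℕ)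
    (hm : ∀ v, 0 < m v) (μ : α → ℝ) :
    sdensity (H.blowup m) H μ =
      ∑ f ∈ Finset.univ.filter (fun f : α → α => IsStrongHom H H f),
        ∏ v, μ (f v) ^ m v := by
  rw [sdensity, ← Finset.sum_filter]
  refine Finset.sum_nbij' (fun ψ => fun v => ψ ⟨v, ⟨0, hm v⟩⟩)
    (fun f => fun x => f x.1) ?_ ?_ ?_ ?_ ?_
  · intro ψ hψ
    simp only [Finset.mem_filter, Finset.mem_univ, true_and] at hψ ⊢
    exact fun u w => hψ ⟨u, ⟨0, hm u⟩⟩ ⟨w, ⟨0, hm w⟩⟩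
  · intro f hf
    simp only [Finset.mem_filter, Finset.mem_univ, true_and] at hf ⊢
    exact fun x y => hf x.1 y.1
  · intro ψ hψ
    rw [Finset.mem_filter] at hψ
    funext x
    exact (blowup_strongHom_eq htf hm hψ.2 x.1 x.2).symm
  · intro f hf
    rfl
  · intro ψ hψ
    rw [Finset.mem_filter] at hψ
    calc ∏ x : (Σ v : α, Fin (m v)), μ (ψ x)
        = ∏ x : (Σ v : α, Fin (m v)), μ (ψ ⟨x.1, ⟨0, hm x.1⟩⟩) := by
          refine Finset.prod_congr rfl fun x _ => ?_
          rw [blowup_strongHom_eq htf hm hψ.2 x.1 x.2]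
      _ = ∏ v : α, ∏ _i : Fin (m v), μ (ψ ⟨v, ⟨0, hm v⟩⟩) := by
          rw [← Finset.univ_sigma_univ, Finset.prod_sigma]
      _ = ∏ v : α, μ (ψ ⟨v, ⟨0, hm v⟩⟩) ^ m v := by
          refine Finset.prod_congr rfl fun v _ => ?_
          simp [Finset.card_univ]

lemma exp_indep {ι : Type} (H0 : ℕ) :
    ∀ (S : Finset ι), ∀ (c L : ι → ℝ), (∀ i ∈ S, 0 < c i) →
    (∀ h : ℕ, H0 ≤ h → ∑ i ∈ S, L i * c i ^ h = 0) →
    ∀ r : ℝ, ∑ i ∈ S.filter (fun i => c i = r), L i = 0 := by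
  intro S
  induction S using Finset.strongInduction with
  | _ S ih =>
    intro c L hc hsum r
    rcases S.eq_empty_or_nonempty with rfl | hS
    · simp
    · have hSim : (S.image c).Nonempty := hS.image c
      set R := (S.image c).max' hSim with hR
      obtain ⟨i0, hi0S, hi0⟩ := Finset.mem_image.1 ((S.image c).max'_mem hSim)
      have hi0R : c i0 = R := by rw [hR]; exact hi0
      have hRpos : 0 < R := hi0R ▸ hc i0 hi0S
      have hle : ∀ i ∈ S, c i ≤ R := fun i hi =>
        Finset.le_max' _ _ (Finset.mem_image_of_mem c hi)
      set T := S.filter (fun i => c i = R) with hT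
      set S' := S.filter (fun i => ¬ c i = R) with hS'
      set A := ∑ i ∈ T, L i with hA
      -- the sequence
      have hA0 : A = 0 := by
        set a : ℕ → ℝ := fun h => ∑ i ∈ S', L i * (c i / R) ^ h with ha
        have hlim : Filter.Tendsto a Filter.atTop (nhds 0) := by
          rw [ha]
          have : Filter.Tendsto (fun h : ℕ => ∑ i ∈ S', L i * (c i / R) ^ h)
              Filter.atTop (nhds (∑ i ∈ S', (0:ℝ))) := by
            refine tendsto_finset_sum _ fun i hi => ?_
            rw [Finset.mem_filter] at hi
            have h0 : 0 ≤ c i / R := div_nonneg (hc i hi.1).le hRpos.le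
            have h1 : c i / R < 1 :=
              (div_lt_one hRpos).2 (lt_of_le_of_ne (hle i hi.1) hi.2)
            simpa using
              (tendsto_pow_atTop_nhds_zero_of_lt_one h0 h1).const_mul (L i)
          simpa using this
        have heq : ∀ h : ℕ, H0 ≤ h → A + a h = 0 := by
          intro h hh
          have hRh : (0:ℝ) < R ^ h := pow_pos hRpos h
          have hsplit : ∑ i ∈ T, L i * c i ^ h + ∑ i ∈ S', L i * c i ^ h = 0 := by
            rw [hT, hS', Finset.sum_filter_add_sum_filter_not]
            exact hsum h hh
          have h1 : ∑ i ∈ T, L i * c i ^ h = A * R ^ h := by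
            rw [hA, Finset.sum_mul]
            refine Finset.sum_congr rfl fun i hi => ?_
            rw [Finset.mem_filter] at hi
            rw [hi.2]
          have h2 : ∑ i ∈ S', L i * c i ^ h = a h * R ^ h := by
            rw [ha, Finset.sum_mul]
            refine Finset.sum_congr rfl fun i hi => ?_
            rw [div_pow, mul_assoc, div_mul_cancel₀ _ hRh.ne']
          have : (A + a h) * R ^ h = 0 := by
            rw [add_mul, ← h1, ← h2]; exact hsplit
          exact (mul_eq_zero.1 this).resolve_right hRh.ne'
        have h1 : Filter.Tendsto (fun h : ℕ => A + a h) Filter.atTop (nhds A) := by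
          simpa using (tendsto_const_nhds (x := A)).add hlim
        have h2 : (fun h : ℕ => A + a h) =ᶠ[Filter.atTop] fun _ => (0:ℝ) :=
          Filter.eventually_atTop.2 ⟨H0, heq⟩
        have := tendsto_nhds_unique (h1.congr' h2) tendsto_const_nhds
        linarith
      by_cases hrR : r = R
      · rw [hrR, ← hT, ← hA]; exact hA0
      · have hsub : S' ⊂ S := by
          refine Finset.filter_ssubset.2 ⟨i0, hi0S, ?_⟩
          simp [hi0R]
        have hsum' : ∀ h : ℕ, H0 ≤ h → ∑ i ∈ S', L i * c i ^ h = 0 := by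
          intro h hh
          have hsplit : ∑ i ∈ T, L i * c i ^ h + ∑ i ∈ S', L i * c i ^ h = 0 := by
            rw [hT, hS', Finset.sum_filter_add_sum_filter_not]
            exact hsum h hh
          have h1 : ∑ i ∈ T, L i * c i ^ h = A * R ^ h := by
            rw [hA, Finset.sum_mul]
            refine Finset.sum_congr rfl fun i hi => ?_
            rw [Finset.mem_filter] at hi
            rw [hi.2]
          rw [h1, hA0, zero_mul, zero_add] at hsplit
          exact hsplit
        have := ih S' hsub c L (fun i hi => hc i (Finset.filter_subset _ _ hi)) hsum' r
        rw [← this]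
        congr 1
        rw [hS', Finset.filter_filter]
        refine Finset.filter_congr fun i _ => ?_
        exact ⟨fun h => ⟨fun hh => hrR (h.symm.trans hh), h⟩, And.right⟩

end Aux

theorem stmt11 {α : Type} [Fintype α] [Nonempty α] (H : SimpleGraph α)
    (htf : IsTwinFree H) (k : α → ℕ) (hk : ∀ v, 0 < k v)
    (hmax : ∃ h0 : ℕ, 0 < h0 ∧ ∀ h : ℕ, h0 ≤ h → ∀ μ : α → ℝ, IsWeight μ →
      sdensity (H.blowup fun v => h * k v) H μ ≤
        sdensity (H.blowup fun v => h * k v) H (fun v => (k v : ℝ) / ∑ u : α, (k u : ℝ))) :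
    ∀ σ : H ≃g H, ∀ v, k (σ v) = k v := by
  obtain ⟨h0, hh0, hmax⟩ := hmax
  intro σ v0
  by_contra hcon
  have hkR : ∀ v : α, (0:ℝ) < (k v : ℝ) := fun v => by exact_mod_cast hk v
  have hn0 : (0:ℝ) < ∑ u : α, (k u : ℝ) :=
    Finset.sum_pos (fun u _ => hkR u) Finset.univ_nonempty
  set n : ℝ := ∑ u : α, (k u : ℝ) with hn
  set μs : α → ℝ := fun v => (k v : ℝ) / n with hμs
  have hμspos : ∀ v, 0 < μs v := fun v => div_pos (hkR v) hn0
  have hμsne : ∀ v, μs v ≠ 0 := fun v => (hμspos v).ne'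
  have hμssum : ∑ v, μs v = 1 := by
    simp only [hμs]
    rw [← Finset.sum_div, ← hn]
    exact div_self hn0.ne'
  set S : Finset (α → α) := Finset.univ.filter (fun f : α → α => IsStrongHom H H f)
    with hSdef
  set c : (α → α) → ℝ := fun f => ∏ v, μs (f v) ^ k v with hcdef
  have hcpos : ∀ f : α → α, 0 < c f := fun f =>
    Finset.prod_pos fun v _ => pow_pos (hμspos _) _
  -- KEY: first-order condition at the interior maximum
  have key : ∀ d : α → ℝ, ∑ v, d v = 0 → ∀ h : ℕ, h0 ≤ h →
      ∑ f ∈ S, (∑ v, (k v : ℝ) * d (f v) / μs (f v)) * c f ^ h = 0 := by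
    intro d hd h hh
    have hposh : 0 < h := lt_of_lt_of_le hh0 hh
    have hm : ∀ v : α, 0 < h * k v := fun v => Nat.mul_pos hposh (hk v)
    set G : ℝ → ℝ := fun t => ∑ f ∈ S, ∏ v, (μs (f v) + t * d (f v)) ^ (h * k v) with hG
    set ε : ℝ := Finset.univ.inf' Finset.univ_nonempty (fun v => μs v / (|d v| + 1)) with hε
    have hεpos : 0 < ε := by
      rw [hε]
      refine (Finset.lt_inf'_iff _).2 fun v _ => div_pos (hμspos v) (by positivity)
    have hweight : ∀ t : ℝ, |t| < ε → IsWeight (fun v => μs v + t * d v) := by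
      intro t ht
      constructor
      · intro v
        have h1 : ε ≤ μs v / (|d v| + 1) := by
          rw [hε]; exact Finset.inf'_le _ (Finset.mem_univ v)
        have h2 : |t * d v| < μs v := by
          rw [abs_mul]
          calc |t| * |d v| ≤ |t| * (|d v| + 1) := by
                have := abs_nonneg t; nlinarith [abs_nonneg (d v)]
            _ < ε * (|d v| + 1) := by
                have := abs_nonneg (d v)
                exact mul_lt_mul_of_pos_right ht (by linarith)
            _ ≤ μs v := by
                have h3 : (0:ℝ) < |d v| + 1 := by positivity
                exact (le_div_iff₀ h3).1 h1
        have h3 := (abs_lt.1 h2).1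
        simp only []
        linarith
      · rw [Finset.sum_add_distrib, hμssum]
        simp only [← Finset.mul_sum]
        rw [hd, mul_zero, add_zero]
    have hlocmax : IsLocalMax G 0 := by
      have hmem : Set.Ioo (-ε) ε ∈ nhds (0:ℝ) := Ioo_mem_nhds (by linarith) hεpos
      have : ∀ᶠ t in nhds (0:ℝ), G t ≤ G 0 := by
        filter_upwards [hmem] with t ht
        have htw := hweight t (abs_lt.2 ⟨ht.1, ht.2⟩)
        have e1 : G t = sdensity (H.blowup fun v => h * k v) H (fun v => μs v + t * d v) := by
          rw [sdensity_blowup_eq htf _ hm, hG, hSdef]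
        have e2 : G 0 = sdensity (H.blowup fun v => h * k v) H μs := by
          rw [sdensity_blowup_eq htf _ hm, hG, hSdef]
          norm_num
        rw [e1, e2]
        exact hmax h hh _ htw
      exact this
    have hder : HasDerivAt G (∑ f ∈ S, ∑ v : α,
        (∏ w ∈ Finset.univ.erase v, (μs (f w) + 0 * d (f w)) ^ (h * k w)) •
          (((h * k v : ℕ) : ℝ) * (μs (f v) + 0 * d (f v)) ^ (h * k v - 1) * d (f v))) 0 := by
      rw [hG]
      apply HasDerivAt.fun_sum
      intro f _
      apply HasDerivAt.fun_finsetProd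
      intro v _
      exact ((hasDerivAt_mul_const (d (f v))).const_add (μs (f v))).pow _
    have hD0 := hlocmax.deriv_eq_zero
    rw [hder.deriv] at hD0
    simp only [zero_mul, add_zero, smul_eq_mul] at hD0
    have htrans : (∑ f ∈ S, ∑ v : α,
        (∏ w ∈ Finset.univ.erase v, μs (f w) ^ (h * k w)) *
          (((h * k v : ℕ) : ℝ) * μs (f v) ^ (h * k v - 1) * d (f v)))
        = (h : ℝ) * ∑ f ∈ S, (∑ v, (k v : ℝ) * d (f v) / μs (f v)) * c f ^ h := by
      rw [Finset.mul_sum]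
      refine Finset.sum_congr rfl fun f _ => ?_
      rw [Finset.sum_mul, Finset.mul_sum]
      refine Finset.sum_congr rfl fun v _ => ?_
      have hA : μs (f v) ≠ 0 := hμsne _
      have e1 : c f ^ h = ∏ w, μs (f w) ^ (h * k w) := by
        rw [hcdef, ← Finset.prod_pow]
        exact Finset.prod_congr rfl fun w _ => by rw [← pow_mul, Nat.mul_comm]
      have e2 : (∏ w ∈ Finset.univ.erase v, μs (f w) ^ (h * k w)) * μs (f v) ^ (h * k v)
          = ∏ w, μs (f w) ^ (h * k w) :=
        Finset.prod_erase_mul _ _ (Finset.mem_univ v)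
      have e3 : μs (f v) ^ (h * k v) = μs (f v) ^ (h * k v - 1) * μs (f v) := by
        rw [← pow_succ, Nat.sub_add_cancel (hm v)]
      rw [e1, ← e2, e3]
      push_cast
      field_simp
    rw [htrans] at hD0
    have hhne : (h:ℝ) ≠ 0 := by exact_mod_cast hposh.ne'
    exact (mul_eq_zero.1 hD0).resolve_left hhne
  -- the level set of σ
  have hσS : ⇑σ ∈ S := by
    rw [hSdef, Finset.mem_filter]
    exact ⟨Finset.mem_univ _, fun u w => σ.map_rel_iff.symm⟩
  set T : Finset (α → α) := S.filter (fun f => c f = c ⇑σ) with hTdef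
  have hσT : ⇑σ ∈ T := by rw [hTdef, Finset.mem_filter]; exact ⟨hσS, rfl⟩
  have hlevel : ∀ d : α → ℝ, ∑ v, d v = 0 →
      ∑ f ∈ T, ∑ v, (k v : ℝ) * d (f v) / μs (f v) = 0 := by
    intro d hd
    have := exp_indep h0 S c (fun f => ∑ v, (k v : ℝ) * d (f v) / μs (f v))
      (fun i _ => hcpos i) (key d hd) (c ⇑σ)
    rw [hTdef]
    exact this
  set E : α → ℝ := fun w => ∑ f ∈ T, ∑ v, (if f v = w then (k v : ℝ) else 0) with hEdef
  have hEratio : ∀ w1 w2 : α, E w1 / μs w1 = E w2 / μs w2 := by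
    intro w1 w2
    by_cases hww : w1 = w2
    · rw [hww]
    · have hd : ∑ v, ((if v = w1 then (1:ℝ) else 0) - (if v = w2 then 1 else 0)) = 0 := by
        rw [Finset.sum_sub_distrib]
        simp [Finset.sum_ite_eq']
      have h1 := hlevel _ hd
      have h2 : ∀ f ∈ T, (∑ v, (k v:ℝ) *
          ((if f v = w1 then (1:ℝ) else 0) - (if f v = w2 then 1 else 0)) / μs (f v))
          = (∑ v, if f v = w1 then (k v:ℝ) else 0) / μs w1
            - (∑ v, if f v = w2 then (k v:ℝ) else 0) / μs w2 := by
        intro f _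
        rw [Finset.sum_div, Finset.sum_div, ← Finset.sum_sub_distrib]
        refine Finset.sum_congr rfl fun v _ => ?_
        split_ifs with h1 h2 h3
        · exact absurd (h1.symm.trans h2) hww
        · rw [h1]; ring
        · rw [h3]; ring
        · ring
      rw [Finset.sum_congr rfl h2, Finset.sum_sub_distrib, ← Finset.sum_div,
        ← Finset.sum_div] at h1
      simp only [hEdef]
      linarith
  have hEsum : ∑ w, E w = (T.card : ℝ) * n := by
    simp only [hEdef]
    rw [Finset.sum_comm]
    have : ∀ f ∈ T, (∑ w, ∑ v, if f v = w then (k v:ℝ) else 0) = n := by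
      intro f _
      rw [Finset.sum_comm]
      have : ∀ v : α, (∑ w, if f v = w then (k v:ℝ) else 0) = (k v:ℝ) := by
        intro v
        rw [Finset.sum_ite_eq]
        simp
      rw [Finset.sum_congr rfl fun v _ => this v, hn]
    rw [Finset.sum_congr rfl this, Finset.sum_const, nsmul_eq_mul]
  have hEval : ∀ w, E w = (T.card : ℝ) * (k w : ℝ) := by
    intro w
    have h1 : ∀ w', E w' = (E w / μs w) * μs w' := by
      intro w'
      rw [← hEratio w' w]
      exact (div_mul_cancel₀ _ (hμsne w')).symm
    have h2 : ∑ w', E w' = (E w / μs w) := by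
      rw [Finset.sum_congr rfl fun w' _ => h1 w', ← Finset.mul_sum, hμssum, mul_one]
    have h3 : E w / μs w = (T.card:ℝ) * n := by rw [← h2, hEsum]
    have h4 : E w = (E w / μs w) * μs w := (div_mul_cancel₀ _ (hμsne w)).symm
    rw [h4, h3]
    simp only [hμs]
    rw [mul_assoc, mul_div_assoc', mul_div_cancel_left₀ _ hn0.ne']
  -- the log identity
  have hlog : ∀ f : α → α, ∑ v, (k v : ℝ) * Real.log (k (f v))
      = Real.log (c f) + n * Real.log n := by
    intro f
    rw [hcdef]
    rw [Real.log_prod (fun v _ => pow_ne_zero _ (hμsne (f v)))]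
    have e : ∀ v : α, Real.log (μs (f v) ^ k v)
        = (k v:ℝ) * (Real.log (k (f v)) - Real.log n) := by
      intro v
      rw [Real.log_pow]
      simp only [hμs]
      rw [Real.log_div (hkR (f v)).ne' hn0.ne']
    rw [Finset.sum_congr rfl fun v _ => e v]
    simp only [mul_sub]
    rw [Finset.sum_sub_distrib, ← Finset.sum_mul, ← hn]
    ring
  have hfc : ∀ f ∈ T, (∑ v, (k v:ℝ) * Real.log (k (f v)))
      = ∑ v, (k v:ℝ) * Real.log (k (σ v)) := by
    intro f hf
    rw [hTdef, Finset.mem_filter] at hf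
    rw [hlog f, hlog ⇑σ, hf.2]
  have hT1 : ∑ f ∈ T, ∑ v, (k v:ℝ) * Real.log (k (f v))
      = (T.card:ℝ) * ∑ v, (k v:ℝ) * Real.log (k (σ v)) := by
    rw [Finset.sum_congr rfl hfc, Finset.sum_const, nsmul_eq_mul]
  have hT2 : ∑ f ∈ T, ∑ v, (k v:ℝ) * Real.log (k (f v))
      = (T.card:ℝ) * ∑ w, (k w:ℝ) * Real.log (k w) := by
    have h1 : ∀ f : α → α, ∀ v : α, (k v:ℝ) * Real.log (k (f v))
        = ∑ w, (if f v = w then (k v:ℝ) else 0) * Real.log (k w) := by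
      intro f v
      simp only [ite_mul, zero_mul]
      rw [Finset.sum_ite_eq]
      simp
    calc ∑ f ∈ T, ∑ v, (k v:ℝ) * Real.log (k (f v))
        = ∑ f ∈ T, ∑ v : α, ∑ w, (if f v = w then (k v:ℝ) else 0) * Real.log (k w) := by
          exact Finset.sum_congr rfl fun f _ => Finset.sum_congr rfl fun v _ => h1 f v
      _ = ∑ f ∈ T, ∑ w : α, ∑ v : α, (if f v = w then (k v:ℝ) else 0) * Real.log (k w) :=
          Finset.sum_congr rfl fun f _ => Finset.sum_comm
      _ = ∑ w : α, ∑ f ∈ T, ∑ v : α, (if f v = w then (k v:ℝ) else 0) * Real.log (k w) :=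
          Finset.sum_comm
      _ = ∑ w, (∑ f ∈ T, ∑ v : α, if f v = w then (k v:ℝ) else 0) * Real.log (k w) := by
          refine Finset.sum_congr rfl fun w _ => ?_
          rw [Finset.sum_mul]
          exact Finset.sum_congr rfl fun f _ => by rw [Finset.sum_mul]
      _ = ∑ w, (T.card:ℝ) * (k w:ℝ) * Real.log (k w) := by
          refine Finset.sum_congr rfl fun w _ => ?_
          have he := hEval w
          simp only [hEdef] at he
          rw [he]
      _ = (T.card:ℝ) * ∑ w, (k w:ℝ) * Real.log (k w) := by
          rw [Finset.mul_sum]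
          exact Finset.sum_congr rfl fun w _ => by ring
  have hmpos : (0:ℝ) < (T.card:ℝ) := by
    exact_mod_cast Finset.card_pos.2 ⟨⇑σ, hσT⟩
  have hΛ : ∑ v, (k v:ℝ) * Real.log (k (σ v)) = ∑ w, (k w:ℝ) * Real.log (k w) :=
    mul_left_cancel₀ hmpos.ne' (hT1.symm.trans hT2)
  -- strict Gibbs inequality
  have hsum_eq : ∑ v, ((k (σ v):ℝ)) = ∑ v, (k v:ℝ) :=
    Equiv.sum_comp σ.toEquiv (fun v => (k v:ℝ))
  have hterm : ∀ v : α, (k v:ℝ) * (Real.log (k (σ v)) - Real.log (k v))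
      ≤ (k (σ v):ℝ) - (k v:ℝ) := by
    intro v
    have hx : (0:ℝ) < (k (σ v):ℝ) / (k v:ℝ) := div_pos (hkR _) (hkR _)
    have h1 : Real.log ((k (σ v):ℝ) / (k v:ℝ)) ≤ (k (σ v):ℝ)/(k v:ℝ) - 1 :=
      Real.log_le_sub_one_of_pos hx
    have h2 : Real.log (k (σ v)) - Real.log (k v) = Real.log ((k (σ v):ℝ) / (k v:ℝ)) :=
      (Real.log_div (hkR _).ne' (hkR _).ne').symm
    rw [h2]
    calc (k v:ℝ) * Real.log ((k (σ v):ℝ) / (k v:ℝ))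
        ≤ (k v:ℝ) * ((k (σ v):ℝ)/(k v:ℝ) - 1) :=
          mul_le_mul_of_nonneg_left h1 (hkR v).le
      _ = (k (σ v):ℝ) - (k v:ℝ) := by
          field_simp [(hkR v).ne']
  have htermstrict : (k v0:ℝ) * (Real.log (k (σ v0)) - Real.log (k v0))
      < (k (σ v0):ℝ) - (k v0:ℝ) := by
    have hx : (0:ℝ) < (k (σ v0):ℝ) / (k v0:ℝ) := div_pos (hkR _) (hkR _)
    have hne1 : (k (σ v0):ℝ) / (k v0:ℝ) ≠ 1 := by
      rw [Ne, div_eq_one_iff_eq (hkR v0).ne']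
      exact_mod_cast hcon
    have h1 : Real.log ((k (σ v0):ℝ) / (k v0:ℝ)) < (k (σ v0):ℝ)/(k v0:ℝ) - 1 :=
      Real.log_lt_sub_one_of_pos hx hne1
    have h2 : Real.log (k (σ v0)) - Real.log (k v0) = Real.log ((k (σ v0):ℝ) / (k v0:ℝ)) :=
      (Real.log_div (hkR _).ne' (hkR _).ne').symm
    rw [h2]
    calc (k v0:ℝ) * Real.log ((k (σ v0):ℝ) / (k v0:ℝ))
        < (k v0:ℝ) * ((k (σ v0):ℝ)/(k v0:ℝ) - 1) :=
          (mul_lt_mul_iff_right₀ (hkR v0)).2 h1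
      _ = (k (σ v0):ℝ) - (k v0:ℝ) := by
          field_simp [(hkR v0).ne']
  have hstrict : ∑ v, (k v:ℝ) * (Real.log (k (σ v)) - Real.log (k v))
      < ∑ v, ((k (σ v):ℝ) - (k v:ℝ)) :=
    Finset.sum_lt_sum (fun v _ => hterm v) ⟨v0, Finset.mem_univ v0, htermstrict⟩
  have hl : ∑ v, (k v:ℝ) * (Real.log (k (σ v)) - Real.log (k v)) = 0 := by
    simp only [mul_sub]
    rw [Finset.sum_sub_distrib, hΛ, sub_self]
  have hr : ∑ v, ((k (σ v):ℝ) - (k v:ℝ)) = 0 := by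
    rw [Finset.sum_sub_distrib, hsum_eq, sub_self]
  rw [hl, hr] at hstrict
  exact absurd hstrict (lt_irrefl 0)
end
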